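/- Let d ≥ 1, n₂ ≥ 1 and n₁ ≥ 2 be integers, n = n₁n₂, and let U₁ ∈ GL_d(ℤ) satisfy U₁^{n₁} = I_d. Let Ĉ ∈ M_{(n−n₂)d, n₂d}(ℤ) be the block matrix obtained by stacking vertically the blocks U₁^{−1}⊗I_{n₂}, U₁^{−2}⊗I_{n₂}, …, U₁^{−n₁+1}⊗I_{n₂}, and let Q₁ = [[I_{n₂d}, 0],[Ĉ, I_{(n−n₂)d}]]. Set D = U₁ ⊗ I_{n₂} ⊗ P_{n₁}^T (with U₁ the innermost Kronecker factor). Then the first n₂d columns of Q₁^{−1}DQ₁ − I_{nd} are zero, so Q₁^{−1}DQ₁ − I_{nd} = [[0, D̂],[0, D̃]] with D̂ ∈ M_{n₂d, (n−n₂)d}(ℤ) and D̃ ∈ M_{(n−n₂)d}(ℤ), and moreover Ĉ·D̂ + D̃ ∈ GL_{(n−n₂)d}(ℤ). -/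

import Mathlib

theorem vunr_aux (d n₁ n₂ : ℕ) (hn₁ : 2 ≤ n₁) (U : Matrix (Fin d) (Fin d) ℤ)
    (hU : U ^ n₁ = 1) (z : Fin n₁) (hz : (z : ℕ) = 0)
    (D Q : Matrix (Fin n₁ × Fin n₂ × Fin d) (Fin n₁ × Fin n₂ × Fin d) ℤ)
    (hD : ∀ x y, D x y =
      if ((x.1 : ℕ) + 1) % n₁ = (y.1 : ℕ) ∧ x.2.1 = y.2.1 then U x.2.2 y.2.2 else 0)
    (hQ : ∀ x y, Q x y =
      if (y.1 : ℕ) = 0 then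
        (if x.2.1 = y.2.1 then (U ^ (n₁ - (x.1 : ℕ))) x.2.2 y.2.2 else 0)
      else (if x = y then 1 else 0)) :
    (∀ (x : Fin n₁ × Fin n₂ × Fin d) (j : Fin n₂) (b : Fin d),
        (Q⁻¹ * D * Q - 1) x (z, j, b) = 0) ∧
    IsUnit
      ((Matrix.of fun (x : {i : Fin n₁ // i ≠ z} × Fin n₂ × Fin d) (y : Fin n₂ × Fin d) =>
          Q (x.1.1, x.2) (z, y)) *
        (Q⁻¹ * D * Q - 1).submatrix
          (fun y : Fin n₂ × Fin d => ((z, y) : Fin n₁ × Fin n₂ × Fin d))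
          (fun x : {i : Fin n₁ // i ≠ z} × Fin n₂ × Fin d =>
            ((x.1.1, x.2) : Fin n₁ × Fin n₂ × Fin d)) +
        (Q⁻¹ * D * Q - 1).submatrix
          (fun x : {i : Fin n₁ // i ≠ z} × Fin n₂ × Fin d =>
            ((x.1.1, x.2) : Fin n₁ × Fin n₂ × Fin d))
          (fun x : {i : Fin n₁ // i ≠ z} × Fin n₂ × Fin d =>
            ((x.1.1, x.2) : Fin n₁ × Fin n₂ × Fin d))) := by
  classical
  have hn₁pos : 0 < n₁ := by omega
  -- the strictly lower-triangular part N of Q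
  set N : Matrix (Fin n₁ × Fin n₂ × Fin d) (Fin n₁ × Fin n₂ × Fin d) ℤ :=
    Matrix.of (fun x y =>
      if (y.1 : ℕ) = 0 ∧ (x.1 : ℕ) ≠ 0 then
        (if x.2.1 = y.2.1 then (U ^ (n₁ - (x.1 : ℕ))) x.2.2 y.2.2 else 0)
      else 0) with hNdef
  have hQ1 : Q = 1 + N := by
    ext x y
    rw [Matrix.add_apply, hQ, hNdef, Matrix.of_apply, Matrix.one_apply]
    by_cases hy : (y.1 : ℕ) = 0
    · by_cases hx : (x.1 : ℕ) = 0
      · have hx1y1 : x.1 = y.1 := Fin.ext (by rw [hx, hy])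
        simp [hy, hx, hU, Matrix.one_apply, Prod.ext_iff, hx1y1, ite_and]
      · have hxy : x ≠ y := fun e => hx (e ▸ hy)
        simp [hy, hx, hxy]
    · simp [hy]
  have hNN : N * N = 0 := by
    ext x y
    rw [Matrix.mul_apply, Matrix.zero_apply]
    apply Finset.sum_eq_zero
    intro w _
    by_cases hw : (w.1 : ℕ) = 0
    · have : N w y = 0 := by rw [hNdef]; simp [hw]
      rw [this, mul_zero]
    · have : N x w = 0 := by rw [hNdef]; simp [hw]
      rw [this, zero_mul]
  have hQR : Q * (1 - N) = 1 := by
    have h : (1 + N) * (1 - N) = 1 - N * N := by noncomm_ring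
    rw [hQ1, h, hNN, sub_zero]
  have hRQ : (1 - N) * Q = 1 := by
    have h : (1 - N) * (1 + N) = 1 - N * N := by noncomm_ring
    rw [hQ1, h, hNN, sub_zero]
  have hQinv : Q⁻¹ = 1 - N := Matrix.inv_eq_right_inv hQR
  have hQQinv : Q * Q⁻¹ = 1 := by rw [hQinv]; exact hQR
  have hQinvQ : Q⁻¹ * Q = 1 := by rw [hQinv]; exact hRQ
  -- U * U^(n₁ - (a+1)%n₁) = U^(n₁ - a)
  have hsucc_pow : ∀ a : Fin n₁, U * U ^ (n₁ - (((a : ℕ) + 1) % n₁)) = U ^ (n₁ - (a : ℕ)) := by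
    intro a
    by_cases hlt : (a : ℕ) + 1 < n₁
    · rw [Nat.mod_eq_of_lt hlt, ← pow_succ']
      congr 1
      omega
    · have ha : (a : ℕ) + 1 = n₁ := by have := a.isLt; omega
      rw [ha, Nat.mod_self, Nat.sub_zero, hU, mul_one,
        show n₁ - (a : ℕ) = 1 by omega, pow_one]
  -- the z-block columns of D*Q coincide with those of Q
  have hDQcol : ∀ (x : Fin n₁ × Fin n₂ × Fin d) (j : Fin n₂) (b : Fin d),
      (D * Q) x (z, j, b) = Q x (z, j, b) := by
    intro x j b
    set s : Fin n₁ := ⟨((x.1 : ℕ) + 1) % n₁, Nat.mod_lt _ hn₁pos⟩ with hs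
    have hcond : ∀ y₁ : Fin n₁, ((((x.1 : ℕ) + 1) % n₁ = (y₁ : ℕ)) ↔ s = y₁) := by
      intro y₁
      rw [Fin.ext_iff]
    rw [Matrix.mul_apply, Fintype.sum_prod_type]
    simp only [hD, hQ, Fintype.sum_prod_type, hz]
    simp only [hcond]
    simp only [ite_and, ite_mul, zero_mul, mul_ite, mul_zero,
      Finset.sum_ite_irrel, Finset.sum_const_zero, Finset.sum_ite_eq,
      Finset.mem_univ, if_true]
    by_cases hxj : x.2.1 = j
    · simp only [hxj, if_true]
      simp only [Finset.sum_ite_eq', Finset.sum_ite_eq, Finset.mem_univ, if_true, eq_self_iff_true]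
      rw [← Matrix.mul_apply]
      rw [hsucc_pow x.1]
    · simp [hxj]
  set M := Q⁻¹ * D * Q - 1 with hMdef
  have hM1 : ∀ (x : Fin n₁ × Fin n₂ × Fin d) (j : Fin n₂) (b : Fin d),
      M x (z, j, b) = 0 := by
    intro x j b
    rw [hMdef, Matrix.sub_apply, mul_assoc, Matrix.mul_apply]
    simp_rw [hDQcol]
    rw [← Matrix.mul_apply, hQinvQ, sub_self]
  refine ⟨hM1, ?_⟩
  -- notation for the index set of the lower-right block
  set σ := {i : Fin n₁ // i ≠ z} × Fin n₂ × Fin d with hσ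
  have hne : ∀ a : {i : Fin n₁ // i ≠ z}, ((a.1 : Fin n₁) : ℕ) ≠ 0 := by
    intro a h
    exact a.2 (Fin.ext (h.trans hz.symm))
  set Dn : Matrix σ σ ℤ :=
    Matrix.of (fun a b => D (a.1.1, a.2) (b.1.1, b.2)) with hDn
  have hiff : ∀ a b : σ,
      (((a.1.1, a.2) : Fin n₁ × Fin n₂ × Fin d) = (b.1.1, b.2)) ↔ a = b := by
    intro a b
    constructor
    · intro h
      rw [Prod.ext_iff] at h
      exact Prod.ext (Subtype.ext h.1) h.2
    · rintro rfl; rfl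
  have hQM : Q * M = D * Q - Q := by
    rw [hMdef, mul_sub, mul_one, ← mul_assoc, ← mul_assoc, hQQinv, one_mul]
  have key : ∀ a b : σ,
      (∑ w : Fin n₂ × Fin d, Q (a.1.1, a.2) (z, w) * M (z, w) (b.1.1, b.2)) +
        M (a.1.1, a.2) (b.1.1, b.2) =
      D (a.1.1, a.2) (b.1.1, b.2) - (if a = b then 1 else 0) := by
    intro a b
    have hb : ((b.1.1 : Fin n₁) : ℕ) ≠ 0 := hne b.1
    have h2 : (Q * M) (a.1.1, a.2) (b.1.1, b.2) =
        D (a.1.1, a.2) (b.1.1, b.2) - (if a = b then 1 else 0) := by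
      rw [hQM, Matrix.sub_apply]
      congr 1
      · rw [Matrix.mul_apply]
        simp [hQ, hb, mul_ite, mul_one, mul_zero, Finset.sum_ite_eq']
      · rw [hQ]
        simp only [hb, if_false]
        simp only [hiff a b]
    have h3 : (Q * M) (a.1.1, a.2) (b.1.1, b.2) =
        (∑ w : Fin n₂ × Fin d, Q (a.1.1, a.2) (z, w) * M (z, w) (b.1.1, b.2)) +
          M (a.1.1, a.2) (b.1.1, b.2) := by
      rw [Matrix.mul_apply, Fintype.sum_prod_type,
        Finset.sum_eq_add_sum_sdiff_singleton_of_mem (Finset.mem_univ z)]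
      congr 1
      have hterm : ∀ v₁ ∈ Finset.univ \ {z},
          (∑ w : Fin n₂ × Fin d, Q (a.1.1, a.2) (v₁, w) * M (v₁, w) (b.1.1, b.2)) =
          if v₁ = a.1.1 then M (a.1.1, a.2) (b.1.1, b.2) else 0 := by
        intro v₁ hv₁
        have hvz : v₁ ≠ z := by
          simp only [Finset.mem_sdiff, Finset.mem_singleton] at hv₁
          exact hv₁.2
        have hv : (v₁ : ℕ) ≠ 0 := fun h => hvz (Fin.ext (h.trans hz.symm))
        by_cases hva : v₁ = a.1.1
        · subst hva
          simp [hQ, hv, Prod.mk.injEq, Finset.sum_ite_eq]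
        · have hav : ¬((a.1.1 : Fin n₁) = v₁) := fun h => hva h.symm
          simp [hQ, hv, Prod.mk.injEq, hav]
          exact fun h => absurd h hva
      rw [Finset.sum_congr rfl hterm, Finset.sum_ite_eq' (Finset.univ \ {z}) a.1.1]
      have hmem : a.1.1 ∈ Finset.univ \ {z} := by
        simp [a.1.2]
      rw [if_pos hmem]
    rw [← h3]
    exact h2
  have hCD :
      (Matrix.of fun (x : σ) (y : Fin n₂ × Fin d) => Q (x.1.1, x.2) (z, y)) *
        M.submatrix (fun y : Fin n₂ × Fin d => ((z, y) : Fin n₁ × Fin n₂ × Fin d))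
          (fun x : σ => ((x.1.1, x.2) : Fin n₁ × Fin n₂ × Fin d)) +
        M.submatrix (fun x : σ => ((x.1.1, x.2) : Fin n₁ × Fin n₂ × Fin d))
          (fun x : σ => ((x.1.1, x.2) : Fin n₁ × Fin n₂ × Fin d)) = Dn - 1 := by
    ext a b
    rw [Matrix.add_apply, Matrix.mul_apply, Matrix.sub_apply, Matrix.submatrix_apply,
      hDn, Matrix.of_apply, Matrix.one_apply]
    simp only [Matrix.submatrix_apply, Matrix.of_apply]
    exact key a b
  -- nilpotency of Dn
  have hstep : ∀ a w : σ, D (a.1.1, a.2) (w.1.1, w.2) ≠ 0 →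
      (w.1.1 : ℕ) = (a.1.1 : ℕ) + 1 := by
    intro a w hne0
    have hc : (((a.1.1 : ℕ)) + 1) % n₁ = ((w.1.1 : ℕ)) := by
      by_contra hcc
      exact hne0 (by rw [hD]; exact if_neg (fun hand => hcc hand.1))
    have hw := hne w.1
    have ha := (a.1.1).isLt
    rcases Nat.lt_or_ge ((a.1.1 : ℕ) + 1) n₁ with h | h
    · rw [Nat.mod_eq_of_lt h] at hc; omega
    · have he : (a.1.1 : ℕ) + 1 = n₁ := by omega
      rw [he, Nat.mod_self] at hc
      omega
  have hpow : ∀ k, ∀ a b : σ, (b.1.1 : ℕ) < (a.1.1 : ℕ) + k → (Dn ^ k) a b = 0 := by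
    intro k
    induction k with
    | zero =>
      intro a b h
      rw [pow_zero, Matrix.one_apply_ne]
      intro e
      subst e
      omega
    | succ k ih =>
      intro a b h
      rw [pow_succ', Matrix.mul_apply]
      apply Finset.sum_eq_zero
      intro w _
      by_cases h0 : Dn a w = 0
      · rw [h0, zero_mul]
      · have hw1 : (w.1.1 : ℕ) = (a.1.1 : ℕ) + 1 := by
          apply hstep a w
          simpa [hDn] using h0
        rw [ih w b (by omega), mul_zero]
  have hnilp : Dn ^ n₁ = 0 := by
    ext a b
    rw [Matrix.zero_apply]
    exact hpow n₁ a b (by have := b.1.1.isLt; omega)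
  have hu : IsUnit (1 - Dn) := IsNilpotent.isUnit_one_sub ⟨n₁, hnilp⟩
  rw [hCD, show Dn - 1 = -(1 - Dn) from (neg_sub 1 Dn).symm]
  exact hu.neg




/-- Lemma `v_unr`.  Conjugating `D = U₁ ⊗ I_{n₂} ⊗ P_{n₁}ᵀ` by the
block-unitriangular matrix `Q₁` kills the first `n₂d` columns of `Q₁⁻¹DQ₁ − I`, and
`Ĉ·D̂ + D̃` is invertible.  Indices are realized by `Fin n₁ × Fin n₂ × Fin d` (with the
`Fin d`-factor innermost), the first `n₂d` rows/columns being those with first component `0`. -/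
theorem v_unr (d n₁ n₂ : ℕ) (hd : 1 ≤ d) (hn₂ : 1 ≤ n₂) (hn₁ : 2 ≤ n₁)
    (U : Matrix (Fin d) (Fin d) ℤ) (hUunit : IsUnit U) (hU : U ^ n₁ = 1) :
    let ι := Fin n₁ × Fin n₂ × Fin d
    let z : Fin n₁ := ⟨0, by omega⟩
    -- D = U ⊗ I_{n₂} ⊗ P_{n₁}ᵀ
    let D : Matrix ι ι ℤ := fun x y =>
      if ((x.1 : ℕ) + 1) % n₁ = (y.1 : ℕ) ∧ x.2.1 = y.2.1 then U x.2.2 y.2.2 else 0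
    -- Q₁ = [[I, 0], [Ĉ, I]] with Ĉ stacking U^{-1}⊗I_{n₂}, …, U^{-n₁+1}⊗I_{n₂}
    let Q : Matrix ι ι ℤ := fun x y =>
      if (y.1 : ℕ) = 0 then
        (if x.2.1 = y.2.1 then (U ^ (n₁ - (x.1 : ℕ))) x.2.2 y.2.2 else 0)
      else (if x = y then 1 else 0)
    let M : Matrix ι ι ℤ := Q⁻¹ * D * Q - 1
    -- the lower-left block Ĉ of Q₁ and the blocks D̂, D̃ of Q₁⁻¹DQ₁ − I
    let Chat : Matrix ({i : Fin n₁ // i ≠ z} × Fin n₂ × Fin d) (Fin n₂ × Fin d) ℤ :=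
      fun x y => Q (x.1.1, x.2) (z, y)
    let Dhat : Matrix (Fin n₂ × Fin d) ({i : Fin n₁ // i ≠ z} × Fin n₂ × Fin d) ℤ :=
      M.submatrix (fun y : Fin n₂ × Fin d => (z, y))
        (fun x : {i : Fin n₁ // i ≠ z} × Fin n₂ × Fin d => (x.1.1, x.2))
    let Dtil : Matrix ({i : Fin n₁ // i ≠ z} × Fin n₂ × Fin d)
        ({i : Fin n₁ // i ≠ z} × Fin n₂ × Fin d) ℤ :=
      M.submatrix
        (fun x : {i : Fin n₁ // i ≠ z} × Fin n₂ × Fin d => (x.1.1, x.2))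
        (fun x : {i : Fin n₁ // i ≠ z} × Fin n₂ × Fin d => (x.1.1, x.2))
    -- the first n₂d columns of Q₁⁻¹DQ₁ − I vanish
    (∀ (x : ι) (j : Fin n₂) (b : Fin d), M x (z, j, b) = 0) ∧
    -- Ĉ·D̂ + D̃ is invertible over ℤ
    IsUnit (Chat * Dhat + Dtil) := by
  intro ι z D Q M Chat Dhat Dtil
  exact vunr_aux d n₁ n₂ hn₁ U hU z rfl D Q (fun _ _ => rfl) (fun _ _ => rfl)
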